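/- Let n ≥ 2 and K ⊆ J ⊆ [n-1]. Then X(Σ)_{K,J;≥0} equals the set of classes [x;y] ∈ X(Σ) admitting a representative (x;y) with x_i = 0 for i ∈ K, x_i a positive real number for i ∉ K, y_i = 0 for i ∉ J, and y_i = 1 for i ∈ J. -/

import Mathlib

open Matrix

attribute [local instance] Classical.propDecidable

noncomputable section

namespace PetersonPaper

/-- `ℂ^{2(n-1)}` with coordinates `(x_1,…,x_{n-1}; y_1,…,y_{n-1})`. -/
abbrev C2 (n : ℕ) := (Fin (n-1) → ℂ) × (Fin (n-1) → ℂ)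

/-- The complement `ℂ^{2(n-1)} - E` of the exceptional locus: for every `i`,
`(x_i, y_i) ≠ (0,0)`. -/
def goodSet (n : ℕ) : Set (C2 n) := { p | ∀ i, p.1 i ≠ 0 ∨ p.2 i ≠ 0 }

/-- The maximal torus `T ⊆ SL_n(ℂ)` of diagonal matrices, recorded by its diagonal
entries `(t_1,…,t_n)` with `∏ t_i = 1`. -/
def TGrp (n : ℕ) : Type := { t : Fin n → ℂ // ∏ i, t i = 1 }

/-- The fundamental weight `ϖ_i(t) = t_1 t_2 ⋯ t_i` (1-based; `i : Fin (n-1)`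
encodes `i.1+1`). -/
def varpi (n : ℕ) (t : TGrp n) (i : Fin (n-1)) : ℂ :=
  ∏ k : Fin n, if (k : ℕ) ≤ (i : ℕ) then t.1 k else 1

/-- The simple root `α_i(t) = t_i t_{i+1}⁻¹` (1-based; `i : Fin (n-1)` encodes
`i.1+1`). -/
def alphaR (n : ℕ) (t : TGrp n) (i : Fin (n-1)) : ℂ :=
  t.1 ⟨i.1, by have := i.isLt; omega⟩ * (t.1 ⟨i.1 + 1, by have := i.isLt; omega⟩)⁻¹

/-- The `T`-action `t • (x; y) = (ϖ_i(t) x_i; α_i(t) y_i)`. -/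
def actT (n : ℕ) (t : TGrp n) (p : C2 n) : C2 n :=
  (fun i => varpi n t i * p.1 i, fun i => alphaR n t i * p.2 i)

/-- The orbit relation of the `T`-action on `ℂ^{2(n-1)} - E`. -/
def XRel (n : ℕ) (p q : goodSet n) : Prop := ∃ t : TGrp n, actT n t ↑p = (↑q : C2 n)

/-- The toric variety `X(Σ) = (ℂ^{2(n-1)} - E)/T`, with the quotient topology. -/
def XSig (n : ℕ) := Quot (XRel n)

noncomputable instance (n : ℕ) : TopologicalSpace (XSig n) :=
  inferInstanceAs (TopologicalSpace (Quot (XRel n)))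

/-- The class `[x; y] ∈ X(Σ)` of a point of `ℂ^{2(n-1)} - E`. -/
def XMk (n : ℕ) (p : goodSet n) : XSig n := Quot.mk (XRel n) p

/-- The torus orbit `X(Σ)_{K,J}`: classes `[x;y]` with `x_i = 0` iff `i ∈ K` and
`y_i ≠ 0` iff `i ∈ J`. -/
def XKJ (n : ℕ) (K J : Set (Fin (n-1))) : Set (XSig n) :=
  { z | ∃ p : goodSet n, XMk n p = z ∧
      (∀ i, (p : C2 n).1 i = 0 ↔ i ∈ K) ∧ (∀ i, (p : C2 n).2 i ≠ 0 ↔ i ∈ J) }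

/-- The nonnegative part `X(Σ)_{≥0}`: classes with a representative all of whose
coordinates are real and nonnegative. -/
def Xge0 (n : ℕ) : Set (XSig n) :=
  { z | ∃ p : goodSet n, XMk n p = z ∧
      ∀ i, ((p : C2 n).1 i).im = 0 ∧ 0 ≤ ((p : C2 n).1 i).re ∧
        ((p : C2 n).2 i).im = 0 ∧ 0 ≤ ((p : C2 n).2 i).re }

/-- `X(Σ)_{K,J;≥0} = X(Σ)_{K,J} ∩ X(Σ)_{≥0}`. -/
def XKJge0 (n : ℕ) (K J : Set (Fin (n-1))) : Set (XSig n) := XKJ n K J ∩ Xge0 n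

/-! ### Auxiliary lemmas -/

lemma TGrp.ne_zero {n : ℕ} (t : TGrp n) (k : Fin n) : t.1 k ≠ 0 := by
  intro h
  have h1 := t.2
  rw [Finset.prod_eq_zero (Finset.mem_univ k) h] at h1
  exact zero_ne_one h1

lemma varpi_ne_zero {n : ℕ} (t : TGrp n) (i : Fin (n-1)) : varpi n t i ≠ 0 := by
  unfold varpi
  rw [Finset.prod_ne_zero_iff]
  intro k _
  split
  · exact TGrp.ne_zero t k
  · exact one_ne_zero

lemma alphaR_ne_zero {n : ℕ} (t : TGrp n) (i : Fin (n-1)) : alphaR n t i ≠ 0 :=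
  mul_ne_zero (TGrp.ne_zero _ _) (inv_ne_zero (TGrp.ne_zero _ _))

def TGrp.one (n : ℕ) : TGrp n := ⟨fun _ => (1 : ℂ), by simp⟩

def TGrp.mul {n : ℕ} (t s : TGrp n) : TGrp n :=
  ⟨fun k => t.1 k * s.1 k, by rw [Finset.prod_mul_distrib, t.2, s.2, one_mul]⟩

def TGrp.inv {n : ℕ} (t : TGrp n) : TGrp n :=
  ⟨fun k => (t.1 k)⁻¹, by rw [Finset.prod_inv_distrib, t.2, inv_one]⟩

lemma TGrp.inv_mul {n : ℕ} (t : TGrp n) : TGrp.mul (TGrp.inv t) t = TGrp.one n :=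
  Subtype.ext (funext fun k => inv_mul_cancel₀ (t.ne_zero k))

lemma varpi_one {n : ℕ} (i : Fin (n-1)) : varpi n (TGrp.one n) i = 1 := by
  unfold varpi TGrp.one; simp

lemma alphaR_one {n : ℕ} (i : Fin (n-1)) : alphaR n (TGrp.one n) i = 1 := by
  unfold alphaR TGrp.one; simp

lemma varpi_mul {n : ℕ} (t s : TGrp n) (i : Fin (n-1)) :
    varpi n (TGrp.mul t s) i = varpi n t i * varpi n s i := by
  unfold varpi TGrp.mul
  rw [← Finset.prod_mul_distrib]
  exact Finset.prod_congr rfl fun k _ => by split <;> simp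

lemma alphaR_mul {n : ℕ} (t s : TGrp n) (i : Fin (n-1)) :
    alphaR n (TGrp.mul t s) i = alphaR n t i * alphaR n s i := by
  unfold alphaR TGrp.mul
  simp only [mul_inv]
  ring

lemma actT_one {n : ℕ} (p : C2 n) : actT n (TGrp.one n) p = p := by
  cases p with
  | mk x y => simp [actT, varpi_one, alphaR_one]

lemma actT_mul {n : ℕ} (t s : TGrp n) (p : C2 n) :
    actT n (TGrp.mul t s) p = actT n t (actT n s p) := by
  cases p with
  | mk x y => simp [actT, varpi_mul, alphaR_mul, mul_assoc]

lemma XRel.refl' {n : ℕ} (p : goodSet n) : XRel n p p := ⟨TGrp.one n, actT_one _⟩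

lemma XRel.symm' {n : ℕ} {p q : goodSet n} (h : XRel n p q) : XRel n q p := by
  obtain ⟨t, ht⟩ := h
  exact ⟨TGrp.inv t, by rw [← ht, ← actT_mul, TGrp.inv_mul, actT_one]⟩

lemma XRel.trans' {n : ℕ} {p q r : goodSet n} (h1 : XRel n p q) (h2 : XRel n q r) :
    XRel n p r := by
  obtain ⟨t, ht⟩ := h1
  obtain ⟨s, hs⟩ := h2
  exact ⟨TGrp.mul s t, by rw [actT_mul, ht, hs]⟩

lemma xrel_of_mk_eq {n : ℕ} {p q : goodSet n} (h : XMk n p = XMk n q) : XRel n p q := by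
  have h' := Quot.eq.mp h
  clear h
  induction h' with
  | rel a b hab => exact hab
  | refl a => exact XRel.refl' a
  | symm a b _ ih => exact XRel.symm' ih
  | trans a b c _ _ ih1 ih2 => exact XRel.trans' ih1 ih2

lemma actT_mem_goodSet {n : ℕ} (t : TGrp n) {p : C2 n} (hp : p ∈ goodSet n) :
    actT n t p ∈ goodSet n := by
  intro i
  rcases hp i with h | h
  · exact Or.inl (mul_ne_zero (varpi_ne_zero t i) h)
  · exact Or.inr (mul_ne_zero (alphaR_ne_zero t i) h)

/-- The auxiliary positive real weights `d_k = ∏_{j ≥ k} c_j`. -/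
def dFun (n : ℕ) (c : Fin (n-1) → ℝ) (k : Fin n) : ℝ :=
  ∏ j : Fin (n-1), if (k : ℕ) ≤ (j : ℕ) then c j else 1

lemma dFun_pos {n : ℕ} {c : Fin (n-1) → ℝ} (hc : ∀ i, 0 < c i) (k : Fin n) :
    0 < dFun n c k := by
  refine Finset.prod_pos fun j _ => ?_
  split
  · exact hc j
  · exact one_pos

lemma dFun_step {n : ℕ} (c : Fin (n-1) → ℝ) (i : Fin (n-1)) (h1 : i.1 < n)
    (h2 : i.1 + 1 < n) :
    dFun n c ⟨i.1, h1⟩ = c i * dFun n c ⟨i.1 + 1, h2⟩ := by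
  unfold dFun
  rw [← Finset.mul_prod_erase Finset.univ _ (Finset.mem_univ i)]
  simp only [le_refl, if_pos]
  congr 1
  rw [← Finset.prod_erase (Finset.univ) (a := i)
    (f := fun (j : Fin (n-1)) => if (i.1 + 1 : ℕ) ≤ (j : ℕ) then c j else 1) (by simp)]
  refine Finset.prod_congr rfl fun j hj => ?_
  have hji : j ≠ i := (Finset.mem_erase.mp hj).1
  have : (j : ℕ) ≠ (i : ℕ) := fun h => hji (Fin.ext h)
  have hiff : ((i : ℕ) ≤ (j : ℕ)) ↔ ((i.1 + 1 : ℕ) ≤ (j : ℕ)) := by omega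
  simp only [hiff]

/-- Existence of a positive-real torus element with prescribed positive simple-root
values, and positive fundamental-weight values. -/
lemma exists_posTorus (n : ℕ) (hn : 2 ≤ n) (c : Fin (n-1) → ℝ) (hc : ∀ i, 0 < c i) :
    ∃ t : TGrp n, (∀ i, alphaR n t i = ((c i : ℝ) : ℂ)) ∧
      ∀ i, ∃ w : ℝ, 0 < w ∧ varpi n t i = ((w : ℝ) : ℂ) := by
  set P : ℝ := ∏ k : Fin n, dFun n c k with hPdef
  have hP : 0 < P := Finset.prod_pos fun k _ => dFun_pos hc k
  set s : ℝ := P ^ (-(1 : ℝ) / n) with hsdef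
  have hs : 0 < s := Real.rpow_pos_of_pos hP _
  have hnR : (n : ℝ) ≠ 0 := by positivity
  have hsn : s ^ n * P = 1 := by
    have h1 : s ^ n = P⁻¹ := by
      rw [hsdef, ← Real.rpow_natCast (P ^ (-(1 : ℝ) / n)) n, ← Real.rpow_mul hP.le]
      rw [show (-(1 : ℝ) / n) * n = -1 by field_simp]
      rw [Real.rpow_neg_one]
    rw [h1, inv_mul_cancel₀ hP.ne']
  have htk : ∀ k : Fin n, (0 : ℝ) < s * dFun n c k := fun k =>
    mul_pos hs (dFun_pos hc k)
  refine ⟨⟨fun k => ((s * dFun n c k : ℝ) : ℂ), ?_⟩, ?_, ?_⟩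
  · rw [← Complex.ofReal_prod]
    rw [show (∏ k : Fin n, (s * dFun n c k)) = s ^ n * P by
      rw [Finset.prod_mul_distrib, Finset.prod_const, hPdef, Finset.card_univ,
        Fintype.card_fin]]
    rw [hsn, Complex.ofReal_one]
  · intro i
    have h2 : i.1 + 1 < n := by have := i.isLt; omega
    show ((s * dFun n c ⟨i.1, _⟩ : ℝ) : ℂ) * (((s * dFun n c ⟨i.1 + 1, _⟩ : ℝ) : ℂ))⁻¹
      = ((c i : ℝ) : ℂ)
    rw [← Complex.ofReal_inv, ← Complex.ofReal_mul]
    congr 1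
    rw [dFun_step c i (by omega) h2]
    have hd : (0 : ℝ) < dFun n c ⟨i.1 + 1, h2⟩ := dFun_pos hc _
    field_simp
  · intro i
    refine ⟨∏ k : Fin n, if (k : ℕ) ≤ (i : ℕ) then s * dFun n c k else 1, ?_, ?_⟩
    · refine Finset.prod_pos fun k _ => ?_
      split
      · exact htk k
      · exact one_pos
    · unfold varpi
      refine Eq.trans (Finset.prod_congr rfl fun k _ => ?_) (Complex.ofReal_prod _ _).symm
      split <;> simp

lemma eq_ofReal_re {z : ℂ} (him : z.im = 0) : z = ((z.re : ℝ) : ℂ) := by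
  apply Complex.ext <;> simp [him]

/-- Proposition (nonnegative strata of `X(Σ)`): for `K ⊆ J ⊆ [n-1]`,
`X(Σ)_{K,J;≥0}` consists exactly of the classes with a representative `(x;y)` with
`x_i = 0` for `i ∈ K`, `x_i` a positive real for `i ∉ K`, `y_i = 0` for `i ∉ J`
and `y_i = 1` for `i ∈ J`. -/
theorem XKJ_nonneg_description
    (n : ℕ) (hn : 2 ≤ n) (K J : Set (Fin (n-1))) (hKJ : K ⊆ J) :
    XKJge0 n K J =
      { z : XSig n | ∃ p : goodSet n, XMk n p = z ∧
          (∀ i, i ∈ K → (p : C2 n).1 i = 0) ∧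
          (∀ i, i ∉ K → ∃ r : ℝ, 0 < r ∧ (p : C2 n).1 i = (r : ℂ)) ∧
          (∀ i, i ∉ J → (p : C2 n).2 i = 0) ∧
          (∀ i, i ∈ J → (p : C2 n).2 i = 1) } := by
  ext z
  constructor
  · rintro ⟨⟨p, hp, hpK, hpJ⟩, q, hq, hqnn⟩
    obtain ⟨t, ht⟩ := xrel_of_mk_eq (hp.trans hq.symm)
    -- transfer the zero pattern from p to q
    have hq1 : ∀ i, ((q : C2 n).1 i = 0 ↔ i ∈ K) := by
      intro i
      rw [← ht]
      show varpi n t i * (p : C2 n).1 i = 0 ↔ i ∈ K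
      rw [mul_eq_zero]
      simp [varpi_ne_zero, hpK i]
    have hq2 : ∀ i, ((q : C2 n).2 i ≠ 0 ↔ i ∈ J) := by
      intro i
      rw [← ht]
      show alphaR n t i * (p : C2 n).2 i ≠ 0 ↔ i ∈ J
      rw [← hpJ i]
      constructor
      · intro h h0
        exact h (by rw [h0, mul_zero])
      · intro h
        exact mul_ne_zero (alphaR_ne_zero t i) h
    -- on J, the y-coordinate of q is a positive real
    have hJpos : ∀ i, i ∈ J → 0 < ((q : C2 n).2 i).re := by
      intro i hi
      obtain ⟨_, _, him, hre⟩ := hqnn i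
      rcases lt_or_eq_of_le hre with h | h
      · exact h
      · exfalso
        apply (hq2 i).mpr hi
        apply Complex.ext <;> simp [him, ← h]
    set c : Fin (n-1) → ℝ := fun i => if i ∈ J then (((q : C2 n).2 i).re)⁻¹ else 1
      with hcdef
    have hc : ∀ i, 0 < c i := by
      intro i
      by_cases hi : i ∈ J
      · simp only [hcdef, if_pos hi]
        exact inv_pos.mpr (hJpos i hi)
      · simp only [hcdef, if_neg hi]
        exact one_pos
    obtain ⟨t', hα, hϖ⟩ := exists_posTorus n hn c hc
    have hgood : actT n t' ↑q ∈ goodSet n := actT_mem_goodSet t' q.2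
    refine ⟨⟨actT n t' ↑q, hgood⟩, ?_, ?_, ?_, ?_, ?_⟩
    · rw [← hq]
      exact (Quot.sound ⟨t', rfl⟩).symm
    · intro i hi
      show varpi n t' i * (q : C2 n).1 i = 0
      rw [(hq1 i).mpr hi, mul_zero]
    · intro i hi
      obtain ⟨w, hw, hwi⟩ := hϖ i
      obtain ⟨him, hre, _, _⟩ := hqnn i
      have hne : (q : C2 n).1 i ≠ 0 := fun h0 => hi ((hq1 i).mp h0)
      have hrepos : 0 < ((q : C2 n).1 i).re := by
        rcases lt_or_eq_of_le hre with h | h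
        · exact h
        · exact absurd (Complex.ext (by simp [← h]) (by simp [him])) hne
      refine ⟨w * ((q : C2 n).1 i).re, mul_pos hw hrepos, ?_⟩
      show varpi n t' i * (q : C2 n).1 i = _
      rw [hwi, eq_ofReal_re him, ← Complex.ofReal_mul]
      simp
    · intro i hi
      show alphaR n t' i * (q : C2 n).2 i = 0
      have h0 : (q : C2 n).2 i = 0 := by
        by_contra h
        exact hi ((hq2 i).mp h)
      rw [h0, mul_zero]
    · intro i hi
      show alphaR n t' i * (q : C2 n).2 i = 1
      obtain ⟨_, _, him, _⟩ := hqnn i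
      rw [hα i, eq_ofReal_re him, ← Complex.ofReal_mul, hcdef]
      simp only [if_pos hi]
      rw [inv_mul_cancel₀ (hJpos i hi).ne', Complex.ofReal_one]
  · rintro ⟨p, hp, hK, hKpos, hJ0, hJ1⟩
    have hx : ∀ i, ((p : C2 n).1 i = 0 ↔ i ∈ K) := by
      intro i
      constructor
      · intro h0
        by_contra hi
        obtain ⟨r, hr, hri⟩ := hKpos i hi
        rw [hri] at h0
        exact hr.ne' (by exact_mod_cast h0)
      · exact hK i
    have hy : ∀ i, ((p : C2 n).2 i ≠ 0 ↔ i ∈ J) := by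
      intro i
      constructor
      · intro h
        by_contra hi
        exact h (hJ0 i hi)
      · intro hi
        rw [hJ1 i hi]
        exact one_ne_zero
    refine ⟨⟨p, hp, hx, hy⟩, p, hp, ?_⟩
    intro i
    have hxnn : ((p : C2 n).1 i).im = 0 ∧ 0 ≤ ((p : C2 n).1 i).re := by
      by_cases hi : i ∈ K
      · rw [hK i hi]; simp
      · obtain ⟨r, hr, hri⟩ := hKpos i hi
        rw [hri]; simp [hr.le]
    have hynn : ((p : C2 n).2 i).im = 0 ∧ 0 ≤ ((p : C2 n).2 i).re := by
      by_cases hi : i ∈ J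
      · rw [hJ1 i hi]; simp
      · rw [hJ0 i hi]; simp
    exact ⟨hxnn.1, hxnn.2, hynn.1, hynn.2⟩

end PetersonPaper
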